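/- arXiv:2107.13061 — 4 statements merged into one kernel-verified Lean document; each statement's English description precedes it below -/
import Mathlib

section
/- Let a, b be real numbers with 3 ≤ a < b. Then for every even integer j = 2s, s ≥ 1, the value of φ_{a,b} at ρ_j is nonnegative: φ_{a,b}(ρ_j) ≥ 0, where ρ_j := q_2 q_3 ⋯ q_j √(q_{j+1}) = a^s b^{s-1} √b. -/
open scoped Classical

/-- Taylor coefficients of `f_{a,b}`: `a₀ = a₁ = 1`,
`aₖ = aₖ₋₁² / (aₖ₋₂ · qₖ)` where `qₖ = a` for even `k` and `qₖ = b` for odd `k`. -/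
noncomputable def coeffAB (a b : ℝ) : ℕ → ℝ
  | 0 => 1
  | 1 => 1
  | n + 2 => (coeffAB a b (n + 1)) ^ 2 / (coeffAB a b n * (if Even n then a else b))

/-- The entire function `f_{a,b}(z) = Σ aₖ zᵏ` (as a function on `ℂ`). -/
noncomputable def fAB (a b : ℝ) (z : ℂ) : ℂ := ∑' k : ℕ, (coeffAB a b k : ℂ) * z ^ k

/-- The restriction of `f_{a,b}` to the reals. -/
noncomputable def fABReal (a b x : ℝ) : ℝ := ∑' k : ℕ, coeffAB a b k * x ^ k

/-- `φ_{a,b}(x) = f_{a,b}(-x) = Σ (-1)ᵏ aₖ xᵏ` (real variable). -/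
noncomputable def phiAB (a b x : ℝ) : ℝ := ∑' k : ℕ, (-1 : ℝ) ^ k * coeffAB a b k * x ^ k

/-- `φ_{a,b}` as a function of a complex variable. -/
noncomputable def phiABC (a b : ℝ) (z : ℂ) : ℂ :=
  ∑' k : ℕ, (-1 : ℂ) ^ k * (coeffAB a b k : ℂ) * z ^ k

/-- Membership in the Laguerre–Pólya class of type I:
`f(z) = c zⁿ e^{βz} ∏ (1 + z/xₖ)` with `c ∈ ℝ`, `β ≥ 0`, `xₖ > 0`, `Σ 1/xₖ < ∞`
(the product over a countable — possibly finite or empty — index set). -/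
def LaguerrePolyaI (f : ℂ → ℂ) : Prop :=
  ∃ (c : ℝ) (n : ℕ) (β : ℝ) (ι : Type) (_ : Countable ι) (x : ι → ℝ),
    0 ≤ β ∧ (∀ i, 0 < x i) ∧ Summable (fun i => (x i)⁻¹) ∧
    ∀ z : ℂ, f z = (c : ℂ) * z ^ n * Complex.exp (β * z) * ∏' i, (1 + z / (x i : ℂ))

/-- The partial theta function `g_t(z) = Σ zᵏ t^{-k²}` (complex variable). -/
noncomputable def partialTheta (t : ℝ) (z : ℂ) : ℂ := ∑' k : ℕ, z ^ k / (t : ℂ) ^ (k ^ 2)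

/-- The partial theta function restricted to the reals. -/
noncomputable def partialThetaReal (t x : ℝ) : ℝ := ∑' k : ℕ, x ^ k / t ^ (k ^ 2)

/-- A function `f : ℂ → ℂ` has only real zeros. -/
def OnlyRealZeros (f : ℂ → ℂ) : Prop := ∀ z : ℂ, f z = 0 → ∃ r : ℝ, z = (r : ℂ)

/-- The constant `q_∞ ≈ 3.2336…`: the infimum of the set
`{t² : t > 1 and g_t has only real zeros}`. -/
noncomputable def qInfty : ℝ :=
  sInf {s : ℝ | ∃ t : ℝ, 1 < t ∧ s = t ^ 2 ∧ OnlyRealZeros (partialTheta t)}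

/-- auxiliary: `RRab a b k = q₂ q₃ ⋯ q_{k+1} = aₖ / aₖ₊₁`. -/
noncomputable def RRab (a b : ℝ) (k : ℕ) : ℝ := a ^ ((k + 1) / 2) * b ^ (k / 2)

lemma coeffAB_pos {a b : ℝ} (ha : 0 < a) (hb : 0 < b) : ∀ k, 0 < coeffAB a b k
  | 0 => by simp [coeffAB]
  | 1 => by simp [coeffAB]
  | (n + 2) => by
      have h1 := coeffAB_pos ha hb n
      have h2 := coeffAB_pos ha hb (n + 1)
      have hq : 0 < (if Even n then a else b) := by split_ifs <;> assumption
      simp only [coeffAB]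
      exact div_pos (pow_pos h2 2) (mul_pos h1 hq)

lemma RRab_pos {a b : ℝ} (ha : 0 < a) (hb : 0 < b) (k : ℕ) : 0 < RRab a b k :=
  mul_pos (pow_pos ha _) (pow_pos hb _)

lemma RRab_succ (a b : ℝ) (k : ℕ) :
    RRab a b (k + 1) = RRab a b k * (if Even k then a else b) := by
  rcases Nat.even_or_odd k with hk | hk
  · obtain ⟨m, rfl⟩ := hk
    have e1 : (m + m + 1 + 1) / 2 = (m + m + 1) / 2 + 1 := by omega
    have e2 : (m + m + 1) / 2 = (m + m) / 2 := by omega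
    simp only [if_pos (Even.add_self m), RRab, e1, e2, pow_succ]
    ring
  · obtain ⟨m, rfl⟩ := hk
    have hodd : ¬ Even (2 * m + 1) := by simp [parity_simps]
    have e1 : (2 * m + 1 + 1 + 1) / 2 = (2 * m + 1 + 1) / 2 := by omega
    have e2 : (2 * m + 1 + 1) / 2 = (2 * m + 1) / 2 + 1 := by omega
    simp only [if_neg hodd, RRab, e1, e2, pow_succ]
    ring

lemma coeffAB_succ_mul {a b : ℝ} (ha : 0 < a) (hb : 0 < b) :
    ∀ k, coeffAB a b (k + 1) * RRab a b k = coeffAB a b k := by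
  intro k
  induction k with
  | zero => simp [coeffAB, RRab]
  | succ n ih =>
      have h0 := coeffAB_pos ha hb n
      have h1 := coeffAB_pos ha hb (n + 1)
      have hq : 0 < (if Even n then a else b) := by split_ifs <;> assumption
      have hR : 0 < RRab a b n := RRab_pos ha hb n
      rw [RRab_succ]
      show coeffAB a b (n + 2) * (RRab a b n * _) = coeffAB a b (n + 1)
      simp only [coeffAB]
      rw [← ih]
      field_simp

lemma sum_pairs (f : ℕ → ℝ) : ∀ n, ∑ k ∈ Finset.range (2 * n), f k
    = ∑ i ∈ Finset.range n, (f (2 * i) + f (2 * i + 1)) := by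
  intro n
  induction n with
  | zero => simp
  | succ n ih =>
      have h2 : 2 * (n + 1) = (2 * n) + 1 + 1 := by ring
      rw [h2, Finset.sum_range_succ, Finset.sum_range_succ, ih, Finset.sum_range_succ]
      ring

lemma pow_shift {y : ℝ} (m n k : ℕ) (h : m + n = k) : y ^ m * y ^ n = y ^ k := by
  rw [← pow_add, h]

lemma pow_mul_base {y : ℝ} (m k : ℕ) (h : m + 1 = k) : y ^ m * y = y ^ k := by
  rw [← pow_succ, h]

lemma pow_base_mul {y : ℝ} (m k : ℕ) (h : m + 1 = k) : y * y ^ m = y ^ k := by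
  rw [← pow_succ', h]

lemma poly_cert {w : ℝ} (hw : 12 ≤ 7 * w) :
    0 ≤ 117 * w ^ 5 - 243 * w ^ 4 + 234 * w - 13 := by
  have hd : 0 ≤ 7 * w - 12 := by linarith
  nlinarith [pow_nonneg hd 2, pow_nonneg hd 3, pow_nonneg hd 4, pow_nonneg hd 5, hd]

set_option maxHeartbeats 1000000 in
/-- For `3 ≤ a < b` and every even `j = 2s`, `s ≥ 1`, one has
`φ_{a,b}(ρ_j) ≥ 0` where `ρ_j = aˢ bˢ⁻¹ √b`. -/
theorem phiAB_nonneg_at_rho (a b : ℝ) (ha : 3 ≤ a) (hab : a < b) (s : ℕ) (hs : 1 ≤ s) :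
    0 ≤ phiAB a b (a ^ s * b ^ (s - 1) * Real.sqrt b) := by
  have ha0 : (0:ℝ) < a := by linarith
  have hb0 : (0:ℝ) < b := by linarith
  have ha1 : (1:ℝ) ≤ a := by linarith
  have hb1 : (1:ℝ) ≤ b := by linarith
  rw [phiAB]
  set w : ℝ := Real.sqrt b with hw_def
  have hw0 : 0 < w := Real.sqrt_pos.mpr hb0
  have hw2 : w ^ 2 = b := Real.sq_sqrt hb0.le
  have hw1 : 1 < w := by nlinarith
  have hw127 : 12 ≤ 7 * w := by nlinarith
  have haw : a ≤ w ^ 2 := by linarith [hw2]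
  set x : ℝ := a ^ s * b ^ (s - 1) * w with hx_def
  have hx0 : 0 < x := by positivity
  set c : ℕ → ℝ := coeffAB a b with hc_def
  have hc : ∀ k, 0 < c k := coeffAB_pos ha0 hb0
  set T : ℕ → ℝ := fun k => c k * x ^ k with hT_def
  have hT : ∀ k, 0 < T k := fun k => mul_pos (hc k) (pow_pos hx0 k)
  have hRpos : ∀ k, 0 < RRab a b k := RRab_pos ha0 hb0
  have hstep : ∀ k, T (k + 1) * RRab a b k = T k * x := by
    intro k
    have hcs := coeffAB_succ_mul ha0 hb0 k
    calc T (k + 1) * RRab a b k = (c (k + 1) * RRab a b k) * x ^ (k + 1) := by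
          simp only [hT_def]; ring
      _ = c k * x ^ (k + 1) := by rw [hcs]
      _ = T k * x := by simp only [hT_def]; rw [pow_succ]; ring
  have hRR : ∀ k, RRab a b k = a ^ ((k + 1) / 2) * b ^ (k / 2) := fun _ => rfl
  have hRRval : ∀ k p q : ℕ, (k + 1) / 2 = p → k / 2 = q → RRab a b k = a ^ p * b ^ q := by
    intro k p q h1 h2; rw [hRR, h1, h2]
  have hpowa : ∀ {m n : ℕ}, m ≤ n → a ^ m ≤ a ^ n := fun h => pow_le_pow_right₀ ha1 h
  have hpowb : ∀ {m n : ℕ}, m ≤ n → b ^ m ≤ b ^ n := fun h => pow_le_pow_right₀ hb1 h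
  have hww : w * w = b := by nlinarith
  have hxw : x * w = a ^ s * b ^ s := by
    have hb' : b ^ (s - 1) * b = b ^ s := pow_mul_base _ _ (by omega)
    calc x * w = a ^ s * (b ^ (s - 1) * (w * w)) := by rw [hx_def]; ring
      _ = a ^ s * (b ^ (s - 1) * b) := by rw [hww]
      _ = a ^ s * b ^ s := by rw [hb']
  have hx2 : x ^ 2 = a ^ (2 * s) * b ^ (2 * s - 1) := by
    have ea : a ^ s * a ^ s = a ^ (2 * s) := pow_shift _ _ _ (by omega)
    have eb1 : b ^ (s - 1) * b ^ (s - 1) = b ^ (2 * s - 2) := pow_shift _ _ _ (by omega)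
    have eb2 : b ^ (2 * s - 2) * b = b ^ (2 * s - 1) := pow_mul_base _ _ (by omega)
    calc x ^ 2 = (a ^ s * a ^ s) * ((b ^ (s - 1) * b ^ (s - 1)) * (w * w)) := by
          rw [hx_def]; ring
      _ = a ^ (2 * s) * (b ^ (2 * s - 2) * b) := by rw [hww, ea, eb1]
      _ = a ^ (2 * s) * b ^ (2 * s - 1) := by rw [eb2]
  -- increasing up to index 2*s
  have hTle : ∀ k, k + 1 ≤ 2 * s → T k ≤ T (k + 1) := by
    intro k hk
    have hRle : RRab a b k ≤ x := by
      rw [hRR]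
      calc a ^ ((k + 1) / 2) * b ^ (k / 2) ≤ a ^ s * b ^ (s - 1) :=
            mul_le_mul (hpowa (by omega)) (hpowb (by omega)) (by positivity) (by positivity)
        _ ≤ a ^ s * b ^ (s - 1) * w := le_mul_of_one_le_right (by positivity) hw1.le
        _ = x := by rw [hx_def]
    have key : T (k + 1) * RRab a b k ≤ T (k + 1) * x :=
      mul_le_mul_of_nonneg_left hRle (hT (k + 1)).le
    rw [hstep k] at key
    exact le_of_mul_le_mul_right key hx0
  have hmono : ∀ m n : ℕ, m ≤ n → n ≤ 2 * s → T m ≤ T n := by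
    intro m n
    induction n with
    | zero =>
        intro hmn _
        have hm0 : m = 0 := by omega
        exact le_of_eq (congrArg T hm0)
    | succ n ih =>
        intro hmn hn
        rcases Nat.lt_or_ge m (n + 1) with h | h
        · exact le_trans (ih (by omega) (by omega)) (hTle n (by omega))
        · have : m = n + 1 := by omega
          rw [this]
  -- symmetry about index 2*s
  have hsym : ∀ m, m ≤ 2 * s → T (2 * s + m) = T (2 * s - m) := by
    intro m
    induction m with
    | zero => intro _; simp
    | succ m ih =>
        intro hm1
        have ihm := ih (by omega)
        obtain ⟨k, hk⟩ : ∃ k, 2 * s = m + 1 + k := ⟨2 * s - (m + 1), by omega⟩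
        have hRRprod : RRab a b (2 * s + m) * RRab a b k = x ^ 2 := by
          rw [hRR, hRR, hx2]
          have e1 : (2 * s + m + 1) / 2 + (k + 1) / 2 = 2 * s := by omega
          have e2 : (2 * s + m) / 2 + k / 2 = 2 * s - 1 := by omega
          calc a ^ ((2 * s + m + 1) / 2) * b ^ ((2 * s + m) / 2) *
                (a ^ ((k + 1) / 2) * b ^ (k / 2))
              = a ^ ((2 * s + m + 1) / 2 + (k + 1) / 2) * b ^ ((2 * s + m) / 2 + k / 2) := by
                rw [pow_add, pow_add]; ring
            _ = a ^ (2 * s) * b ^ (2 * s - 1) := by rw [e1, e2]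
        have h1 := hstep (2 * s + m)
        have h2 := hstep k
        have hk1 : 2 * s - m = k + 1 := by omega
        have hk2 : 2 * s - (m + 1) = k := by omega
        have e3 : 2 * s + (m + 1) = (2 * s + m) + 1 := by omega
        rw [e3, hk2]
        have hkey : T ((2 * s + m) + 1) * (RRab a b (2 * s + m) * RRab a b k)
            = T k * (x * x) := by
          calc T ((2 * s + m) + 1) * (RRab a b (2 * s + m) * RRab a b k)
              = (T ((2 * s + m) + 1) * RRab a b (2 * s + m)) * RRab a b k := by ring
            _ = (T (2 * s + m) * x) * RRab a b k := by rw [h1]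
            _ = (T (2 * s - m) * RRab a b k) * x := by rw [ihm]; ring
            _ = (T (k + 1) * RRab a b k) * x := by rw [hk1]
            _ = T k * (x * x) := by rw [h2]; ring
        rw [hRRprod] at hkey
        have hxx : x * x = x ^ 2 := (sq x).symm
        rw [hxx] at hkey
        exact mul_right_cancel₀ (by positivity) hkey
  -- geometric growth of odd-indexed terms below the peak
  have hgeostep : ∀ i, i + 2 ≤ s → 27 * T (2 * i + 1) ≤ T (2 * i + 3) := by
    intro i hi
    have h1 := hstep (2 * i + 1)
    have h2 := hstep (2 * i + 2)
    have hD : RRab a b (2 * i + 2) * RRab a b (2 * i + 1) = a ^ (2 * i + 2) * b ^ (2 * i + 1) := by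
      rw [hRRval (2 * i + 2) (i + 1) (i + 1) (by omega) (by omega),
        hRRval (2 * i + 1) (i + 1) i (by omega) (by omega)]
      calc a ^ (i + 1) * b ^ (i + 1) * (a ^ (i + 1) * b ^ i)
          = a ^ ((i + 1) + (i + 1)) * b ^ ((i + 1) + i) := by rw [pow_add, pow_add]; ring
        _ = a ^ (2 * i + 2) * b ^ (2 * i + 1) := by
            rw [show (i + 1) + (i + 1) = 2 * i + 2 from by omega,
              show (i + 1) + i = 2 * i + 1 from by omega]
    have hcomb : T (2 * i + 3) * (a ^ (2 * i + 2) * b ^ (2 * i + 1)) = T (2 * i + 1) * x ^ 2 := by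
      rw [← hD]
      calc T (2 * i + 3) * (RRab a b (2 * i + 2) * RRab a b (2 * i + 1))
          = (T ((2 * i + 2) + 1) * RRab a b (2 * i + 2)) * RRab a b (2 * i + 1) := by ring
        _ = (T (2 * i + 2) * x) * RRab a b (2 * i + 1) := by rw [h2]
        _ = (T ((2 * i + 1) + 1) * RRab a b (2 * i + 1)) * x := by ring
        _ = (T (2 * i + 1) * x) * x := by rw [h1]
        _ = T (2 * i + 1) * x ^ 2 := by ring
    obtain ⟨p, hp⟩ : ∃ p, 2 * s = (2 * i + 2) + p := ⟨2 * s - (2 * i + 2), by omega⟩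
    obtain ⟨q, hq⟩ : ∃ q, 2 * s - 1 = (2 * i + 1) + q := ⟨2 * s - 1 - (2 * i + 1), by omega⟩
    have hp2 : 2 ≤ p := by omega
    have hq2 : 2 ≤ q := by omega
    have hap : (9:ℝ) ≤ a ^ p := by
      calc (9:ℝ) = 3 ^ 2 := by norm_num
        _ ≤ a ^ 2 := pow_le_pow_left₀ (by norm_num) ha 2
        _ ≤ a ^ p := hpowa hp2
    have hbq : (9:ℝ) ≤ b ^ q := by
      calc (9:ℝ) = 3 ^ 2 := by norm_num
        _ ≤ b ^ 2 := pow_le_pow_left₀ (by norm_num) (by linarith) 2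
        _ ≤ b ^ q := hpowb hq2
    have hxge : 27 * (a ^ (2 * i + 2) * b ^ (2 * i + 1)) ≤ x ^ 2 := by
      have ea : a ^ (2 * i + 2) * a ^ p = a ^ (2 * s) := pow_shift _ _ _ (by omega)
      have eb : b ^ (2 * i + 1) * b ^ q = b ^ (2 * s - 1) := pow_shift _ _ _ (by omega)
      have hDpos : (0:ℝ) < a ^ (2 * i + 2) * b ^ (2 * i + 1) := by positivity
      have h81 : (27:ℝ) ≤ a ^ p * b ^ q := by
        calc (27:ℝ) ≤ 9 * 9 := by norm_num
          _ ≤ a ^ p * b ^ q :=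
            mul_le_mul hap hbq (by norm_num) (le_trans (by norm_num) hap)
      rw [hx2]
      calc 27 * (a ^ (2 * i + 2) * b ^ (2 * i + 1))
          ≤ (a ^ p * b ^ q) * (a ^ (2 * i + 2) * b ^ (2 * i + 1)) :=
            mul_le_mul_of_nonneg_right h81 hDpos.le
        _ = (a ^ (2 * i + 2) * a ^ p) * (b ^ (2 * i + 1) * b ^ q) := by ring
        _ = a ^ (2 * s) * b ^ (2 * s - 1) := by rw [ea, eb]
    have hDpos : (0:ℝ) < a ^ (2 * i + 2) * b ^ (2 * i + 1) := by positivity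
    have hfin : (27 * T (2 * i + 1)) * (a ^ (2 * i + 2) * b ^ (2 * i + 1))
        ≤ T (2 * i + 3) * (a ^ (2 * i + 2) * b ^ (2 * i + 1)) := by
      rw [hcomb]
      calc (27 * T (2 * i + 1)) * (a ^ (2 * i + 2) * b ^ (2 * i + 1))
          = T (2 * i + 1) * (27 * (a ^ (2 * i + 2) * b ^ (2 * i + 1))) := by ring
        _ ≤ T (2 * i + 1) * x ^ 2 := mul_le_mul_of_nonneg_left hxge (hT _).le
    exact le_of_mul_le_mul_right hfin hDpos
  have hgeosum : ∀ n, n ≤ s - 1 →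
      26 * (∑ i ∈ Finset.range n, T (2 * i + 1)) ≤ T (2 * n + 1) := by
    intro n
    induction n with
    | zero => intro _; simpa using (hT 1).le
    | succ n ih =>
        intro hn
        have h27 := hgeostep n (by omega)
        have ihn := ih (by omega)
        rw [Finset.sum_range_succ]
        have e : 2 * (n + 1) + 1 = 2 * n + 3 := by omega
        rw [e]
        linarith
  have hTtail : ∀ n, s ≤ n → T (2 * n + 1) ≤ T (2 * n) := by
    intro n hn
    have h1 := hstep (2 * n)
    have hge : x ≤ RRab a b (2 * n) := by
      rw [hRRval (2 * n) n n (by omega) (by omega)]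
      calc x = x * 1 := (mul_one x).symm
        _ ≤ x * w := mul_le_mul_of_nonneg_left hw1.le hx0.le
        _ = a ^ s * b ^ s := hxw
        _ ≤ a ^ n * b ^ n :=
            mul_le_mul (hpowa hn) (hpowb hn) (by positivity) (by positivity)
    have key : T (2 * n + 1) * x ≤ T (2 * n + 1) * RRab a b (2 * n) :=
      mul_le_mul_of_nonneg_left hge (hT _).le
    rw [h1] at key
    exact le_of_mul_le_mul_right key hx0
  -- special values
  have hT0 : T 0 = 1 := by simp [hT_def, hc_def, coeffAB]
  have hTm1 : T (2 * s - 1) * w = T (2 * s) := by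
    have h1 := hstep (2 * s - 1)
    have e : 2 * s - 1 + 1 = 2 * s := by omega
    rw [e, hRRval (2 * s - 1) s (s - 1) (by omega) (by omega)] at h1
    have hD0 : (0:ℝ) < a ^ s * b ^ (s - 1) := by positivity
    have hkey : (T (2 * s - 1) * w) * (a ^ s * b ^ (s - 1))
        = T (2 * s) * (a ^ s * b ^ (s - 1)) := by
      rw [h1, hx_def]; ring
    exact mul_right_cancel₀ hD0.ne' hkey
  have hTm2 : T (2 * s - 2) * (a * w) = T (2 * s - 1) := by
    have h1 := hstep (2 * s - 2)
    have e : 2 * s - 2 + 1 = 2 * s - 1 := by omega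
    rw [e, hRRval (2 * s - 2) (s - 1) (s - 1) (by omega) (by omega)] at h1
    have hD0 : (0:ℝ) < a ^ (s - 1) * b ^ (s - 1) := by positivity
    have ea : a ^ (s - 1) * a = a ^ s := pow_mul_base _ _ (by omega)
    have hkey : (T (2 * s - 2) * (a * w)) * (a ^ (s - 1) * b ^ (s - 1))
        = T (2 * s - 1) * (a ^ (s - 1) * b ^ (s - 1)) := by
      rw [h1, hx_def, ← ea]; ring
    exact mul_right_cancel₀ hD0.ne' hkey
  have hT2lb : a * w ^ 2 ≤ T (2 * s) := by
    have hc2 : c 2 = 1 / a := by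
      have : coeffAB a b 2 = (coeffAB a b 1) ^ 2 / (coeffAB a b 0 * a) := by
        simp [coeffAB]
      simp only [hc_def, this, coeffAB]
      norm_num
    have hT2v : T 2 = a ^ (2 * s - 1) * b ^ (2 * s - 1) := by
      have ea : a * a ^ (2 * s - 1) = a ^ (2 * s) := pow_base_mul _ _ (by omega)
      calc T 2 = c 2 * x ^ 2 := by simp only [hT_def]
        _ = 1 / a * (a * a ^ (2 * s - 1) * b ^ (2 * s - 1)) := by rw [hc2, hx2, ← ea]
        _ = a ^ (2 * s - 1) * b ^ (2 * s - 1) := by field_simp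
    have hab' : a * b ≤ a ^ (2 * s - 1) * b ^ (2 * s - 1) := by
      have h1 : a ^ 1 ≤ a ^ (2 * s - 1) := hpowa (by omega)
      have h2 : b ^ 1 ≤ b ^ (2 * s - 1) := hpowb (by omega)
      simp only [pow_one] at h1 h2
      exact mul_le_mul h1 h2 hb0.le (by positivity)
    have h22s : T 2 ≤ T (2 * s) := hmono 2 (2 * s) (by omega) le_rfl
    rw [hw2]
    linarith [hT2v ▸ hab']
  have hT4s : T (4 * s) = 1 := by
    have h := hsym (2 * s) le_rfl
    have e1 : 2 * s + 2 * s = 4 * s := by omega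
    have e2 : 2 * s - 2 * s = 0 := by omega
    rw [e1, e2, hT0] at h
    exact h
  have hT41 : T (4 * s + 1) * (a ^ (2 * s) * b ^ (2 * s)) = x := by
    have h1 := hstep (4 * s)
    rw [hRRval (4 * s) (2 * s) (2 * s) (by omega) (by omega), hT4s, one_mul] at h1
    exact h1
  have hT41b : T (4 * s + 1) * (a * w ^ 3) ≤ 1 := by
    have ea2 : a ^ s * a = a ^ (s + 1) := (pow_succ a s).symm
    have eb2 : b ^ (s - 1) * b ^ 2 = b ^ (s + 1) := pow_shift _ _ _ (by omega)
    have hE : x * (a * w ^ 3) = a ^ (s + 1) * b ^ (s + 1) := by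
      calc x * (a * w ^ 3) = (a ^ s * a) * (b ^ (s - 1) * (w ^ 2) ^ 2) := by
            rw [hx_def]; ring
        _ = (a ^ s * a) * (b ^ (s - 1) * b ^ 2) := by rw [hw2]
        _ = a ^ (s + 1) * b ^ (s + 1) := by rw [ea2, eb2]
    have hle : a ^ (s + 1) * b ^ (s + 1) ≤ a ^ (2 * s) * b ^ (2 * s) :=
      mul_le_mul (hpowa (by omega)) (hpowb (by omega)) (by positivity) (by positivity)
    have hbig : (0:ℝ) < a ^ (2 * s) * b ^ (2 * s) := by positivity
    have hkey : (T (4 * s + 1) * (a * w ^ 3)) * (a ^ (2 * s) * b ^ (2 * s))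
        ≤ 1 * (a ^ (2 * s) * b ^ (2 * s)) := by
      calc (T (4 * s + 1) * (a * w ^ 3)) * (a ^ (2 * s) * b ^ (2 * s))
          = (T (4 * s + 1) * (a ^ (2 * s) * b ^ (2 * s))) * (a * w ^ 3) := by ring
        _ = x * (a * w ^ 3) := by rw [hT41]
        _ = a ^ (s + 1) * b ^ (s + 1) := hE
        _ ≤ a ^ (2 * s) * b ^ (2 * s) := hle
        _ = 1 * (a ^ (2 * s) * b ^ (2 * s)) := (one_mul _).symm
    exact le_of_mul_le_mul_right hkey hbig
  -- summability
  have hsumT : Summable T := by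
    apply summable_of_ratio_norm_eventually_le (r := w⁻¹) (inv_lt_one_of_one_lt₀ hw1)
    filter_upwards [Filter.eventually_ge_atTop (2 * s)] with n hn
    have h1 := hstep n
    have hge : x * w ≤ RRab a b n := by
      rw [hxw, hRR]
      exact mul_le_mul (hpowa (by omega)) (hpowb (by omega)) (by positivity) (by positivity)
    have key : T (n + 1) * (x * w) ≤ T (n + 1) * RRab a b n :=
      mul_le_mul_of_nonneg_left hge (hT _).le
    rw [h1] at key
    have h2 : T (n + 1) * w ≤ T n := by
      have h3 : (T (n + 1) * w) * x ≤ T n * x := by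
        calc (T (n + 1) * w) * x = T (n + 1) * (x * w) := by ring
          _ ≤ T n * x := key
      exact le_of_mul_le_mul_right h3 hx0
    rw [Real.norm_eq_abs, Real.norm_eq_abs, abs_of_pos (hT _), abs_of_pos (hT _),
      inv_mul_eq_div, le_div_iff₀ hw0]
    exact h2
  have hse : Summable (fun i => T (2 * i)) :=
    hsumT.comp_injective (fun i j h => by dsimp only at h; omega :
      Function.Injective (fun i => 2 * i))
  have hso : Summable (fun i => T (2 * i + 1)) :=
    hsumT.comp_injective (fun i j h => by dsimp only at h; omega :
      Function.Injective (fun i => 2 * i + 1))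
  have hfe : ∀ i : ℕ, (-1:ℝ) ^ (2 * i) * c (2 * i) * x ^ (2 * i) = T (2 * i) := by
    intro i
    have h1 : (-1:ℝ) ^ (2 * i) = 1 := by rw [pow_mul]; norm_num
    simp only [hT_def, h1, one_mul]
  have hfo : ∀ i : ℕ, (-1:ℝ) ^ (2 * i + 1) * c (2 * i + 1) * x ^ (2 * i + 1)
      = -(T (2 * i + 1)) := by
    intro i
    have h1 : (-1:ℝ) ^ (2 * i + 1) = -1 := by
      rw [pow_succ, pow_mul]; norm_num
    simp only [hT_def, h1]
    ring
  have hse' : Summable (fun i => (-1:ℝ) ^ (2 * i) * c (2 * i) * x ^ (2 * i)) :=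
    hse.congr (fun i => (hfe i).symm)
  have hso' : Summable (fun i => (-1:ℝ) ^ (2 * i + 1) * c (2 * i + 1) * x ^ (2 * i + 1)) :=
    ((hso.neg).congr (fun i => (hfo i).symm))
  have heo : (∑' i : ℕ, ((-1:ℝ) ^ (2 * i) * c (2 * i) * x ^ (2 * i)))
      + (∑' i : ℕ, ((-1:ℝ) ^ (2 * i + 1) * c (2 * i + 1) * x ^ (2 * i + 1)))
      = ∑' k : ℕ, ((-1:ℝ) ^ k * c k * x ^ k) :=
    tsum_even_add_odd (f := fun k => (-1:ℝ) ^ k * c k * x ^ k) hse' hso'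
  have heven : (∑' i : ℕ, ((-1:ℝ) ^ (2 * i) * c (2 * i) * x ^ (2 * i)))
      = ∑' i : ℕ, T (2 * i) := tsum_congr hfe
  have hodd : (∑' i : ℕ, ((-1:ℝ) ^ (2 * i + 1) * c (2 * i + 1) * x ^ (2 * i + 1)))
      = -(∑' i : ℕ, T (2 * i + 1)) := by
    rw [tsum_congr hfo, tsum_neg]
  have hphi : (∑' k : ℕ, ((-1:ℝ) ^ k * c k * x ^ k))
      = ∑' i : ℕ, (T (2 * i) - T (2 * i + 1)) := by
    rw [← heo, heven, hodd, Summable.tsum_sub hse hso]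
    ring
  rw [hphi]
  have hsumu : Summable (fun i => T (2 * i) - T (2 * i + 1)) := hse.sub hso
  rw [← Summable.sum_add_tsum_nat_add (2 * s + 1) hsumu]
  have htail : 0 ≤ ∑' i : ℕ, (T (2 * (i + (2 * s + 1))) - T (2 * (i + (2 * s + 1)) + 1)) :=
    tsum_nonneg (fun i => sub_nonneg.mpr (hTtail (i + (2 * s + 1)) (by omega)))
  have hfin : 0 ≤ ∑ i ∈ Finset.range (2 * s + 1), (T (2 * i) - T (2 * i + 1)) := by
    set g : ℕ → ℝ := fun k => (-1:ℝ) ^ k * T k with hg_def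
    have hgpair : ∀ i, g (2 * i) + g (2 * i + 1) = T (2 * i) - T (2 * i + 1) := by
      intro i
      have h1 : (-1:ℝ) ^ (2 * i) = 1 := by rw [pow_mul]; norm_num
      have h2 : (-1:ℝ) ^ (2 * i + 1) = -1 := by rw [pow_succ, h1]; norm_num
      simp only [hg_def, h1, h2]
      ring
    have hrefl : ∑ i ∈ Finset.range (2 * s), g (2 * s + (i + 1))
        = ∑ k ∈ Finset.range (2 * s), g k := by
      have hterm : ∀ i ∈ Finset.range (2 * s), g (2 * s + (i + 1)) = g (2 * s - 1 - i) := by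
        intro i hi
        rw [Finset.mem_range] at hi
        have hsymi : T (2 * s + (i + 1)) = T (2 * s - (i + 1)) := hsym (i + 1) (by omega)
        have eT : 2 * s - (i + 1) = 2 * s - 1 - i := by omega
        have esign : 2 * s + (i + 1) = (2 * s - 1 - i) + 2 * (i + 1) := by omega
        simp only [hg_def]
        rw [hsymi, eT, esign, pow_add, pow_mul]
        norm_num
      rw [Finset.sum_congr rfl hterm]
      exact Finset.sum_range_reflect g (2 * s)
    have hg2s : g (2 * s + 0) = T (2 * s) := by
      have h1 : (-1:ℝ) ^ (2 * s) = 1 := by rw [pow_mul]; norm_num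
      simp only [hg_def, Nat.add_zero, h1, one_mul]
    have hg4s1 : g (2 * s + (2 * s + 1)) = -(T (4 * s + 1)) := by
      have e : 2 * s + (2 * s + 1) = 2 * (2 * s) + 1 := by omega
      have h1 : (-1:ℝ) ^ (2 * (2 * s) + 1) = -1 := by
        rw [pow_succ, pow_mul]; norm_num
      have e2 : 2 * (2 * s) + 1 = 4 * s + 1 := by omega
      rw [e]
      show (-1:ℝ) ^ (2 * (2 * s) + 1) * T (2 * (2 * s) + 1) = -(T (4 * s + 1))
      rw [h1, e2]
      ring
    have hcalc : ∑ i ∈ Finset.range (2 * s + 1), (T (2 * i) - T (2 * i + 1))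
        = 2 * (∑ k ∈ Finset.range (2 * s), g k) + T (2 * s) - T (4 * s + 1) := by
      calc ∑ i ∈ Finset.range (2 * s + 1), (T (2 * i) - T (2 * i + 1))
          = ∑ i ∈ Finset.range (2 * s + 1), (g (2 * i) + g (2 * i + 1)) :=
            Finset.sum_congr rfl (fun i _ => (hgpair i).symm)
        _ = ∑ k ∈ Finset.range (2 * (2 * s + 1)), g k := (sum_pairs g (2 * s + 1)).symm
        _ = ∑ k ∈ Finset.range (2 * s + (2 * s + 2)), g k := by
            rw [show 2 * (2 * s + 1) = 2 * s + (2 * s + 2) from by omega]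
        _ = (∑ k ∈ Finset.range (2 * s), g k)
            + ∑ i ∈ Finset.range (2 * s + 2), g (2 * s + i) := by
            rw [Finset.sum_range_add]
        _ = (∑ k ∈ Finset.range (2 * s), g k)
            + ((∑ i ∈ Finset.range (2 * s + 1), g (2 * s + (i + 1))) + g (2 * s + 0)) := by
            rw [Finset.sum_range_succ']
        _ = (∑ k ∈ Finset.range (2 * s), g k)
            + (((∑ i ∈ Finset.range (2 * s), g (2 * s + (i + 1))) + g (2 * s + (2 * s + 1)))
              + g (2 * s + 0)) := by
            rw [Finset.sum_range_succ]
        _ = 2 * (∑ k ∈ Finset.range (2 * s), g k) + T (2 * s) - T (4 * s + 1) := by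
            rw [hrefl, hg2s, hg4s1]; ring
    have hA : ∑ k ∈ Finset.range (2 * s), g k
        = ∑ i ∈ Finset.range s, (T (2 * i) - T (2 * i + 1)) := by
      rw [sum_pairs g s]
      exact Finset.sum_congr rfl (fun i _ => hgpair i)
    -- bound the negative part
    have hAneg : -(∑ i ∈ Finset.range s, (T (2 * i) - T (2 * i + 1)))
        ≤ (∑ i ∈ Finset.range (s - 1), T (2 * i + 1)) + (T (2 * s - 1) - T (2 * s - 2)) := by
      have h1 : -(∑ i ∈ Finset.range s, (T (2 * i) - T (2 * i + 1)))
          = ∑ i ∈ Finset.range s, (T (2 * i + 1) - T (2 * i)) := by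
        rw [Finset.sum_sub_distrib, Finset.sum_sub_distrib]
        ring
      have es : s = (s - 1) + 1 := by omega
      have e1 : 2 * (s - 1) + 1 = 2 * s - 1 := by omega
      have e2 : 2 * (s - 1) = 2 * s - 2 := by omega
      have hsplit2 : ∑ i ∈ Finset.range s, (T (2 * i + 1) - T (2 * i))
          = (∑ i ∈ Finset.range (s - 1), (T (2 * i + 1) - T (2 * i)))
            + (T (2 * s - 1) - T (2 * s - 2)) := by
        calc ∑ i ∈ Finset.range s, (T (2 * i + 1) - T (2 * i))
            = ∑ i ∈ Finset.range ((s - 1) + 1), (T (2 * i + 1) - T (2 * i)) := by rw [← es]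
          _ = (∑ i ∈ Finset.range (s - 1), (T (2 * i + 1) - T (2 * i)))
              + (T (2 * (s - 1) + 1) - T (2 * (s - 1))) := Finset.sum_range_succ _ _
          _ = (∑ i ∈ Finset.range (s - 1), (T (2 * i + 1) - T (2 * i)))
              + (T (2 * s - 1) - T (2 * s - 2)) := by rw [e1, e2]
      have hle : ∑ i ∈ Finset.range (s - 1), (T (2 * i + 1) - T (2 * i))
          ≤ ∑ i ∈ Finset.range (s - 1), T (2 * i + 1) :=
        Finset.sum_le_sum (fun i _ => by linarith [hT (2 * i)])
      rw [h1, hsplit2]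
      linarith
    have hS26 : 26 * (∑ i ∈ Finset.range (s - 1), T (2 * i + 1)) ≤ T (2 * s - 1) := by
      have := hgeosum (s - 1) le_rfl
      have e : 2 * (s - 1) + 1 = 2 * s - 1 := by omega
      rwa [e] at this
    -- the final numeric estimate
    set P := T (2 * s) with hP_def
    set Tm1 := T (2 * s - 1) with hTm1_def
    set Tm2 := T (2 * s - 2) with hTm2_def
    set T41 := T (4 * s + 1) with hT41_def
    set S := ∑ i ∈ Finset.range (s - 1), T (2 * i + 1) with hS_def
    have hP0 : 0 < P := hT _
    have hTm2p : 0 < Tm2 := hT _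
    have hT41p : 0 < T41 := hT _
    have hSnn : 0 ≤ S := Finset.sum_nonneg (fun i _ => (hT _).le)
    have h941 : 9 * w ^ 5 * T41 ≤ P := by
      have h1 : (a * w ^ 2) * (T41 * (a * w ^ 3)) ≤ P * 1 :=
        mul_le_mul hT2lb hT41b (by positivity) hP0.le
      have ha9 : (0:ℝ) ≤ a ^ 2 - 9 := by
        have : (3:ℝ) ^ 2 ≤ a ^ 2 := pow_le_pow_left₀ (by norm_num) ha 2
        norm_num at this
        linarith
      have h2 : 0 ≤ (a ^ 2 - 9) * w ^ 5 * T41 :=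
        mul_nonneg (mul_nonneg ha9 (pow_nonneg hw0.le 5)) hT41p.le
      linarith [h1, h2]
    have hw4 : P ≤ w ^ 4 * Tm2 := by
      have hP2 : Tm2 * (a * w) * w = P := by rw [hTm2, hTm1]
      have h2 : 0 ≤ Tm2 * w ^ 2 * (w ^ 2 - a) :=
        mul_nonneg (mul_nonneg hTm2p.le (sq_nonneg w)) (sub_nonneg.mpr haw)
      linarith [hP2, h2]
    have h26w : 26 * (w * S) ≤ P := by
      have h1 : w * (26 * S) ≤ w * Tm1 := mul_le_mul_of_nonneg_left hS26 hw0.le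
      linarith [h1, hTm1]
    have hkey : 2 * (S + (Tm1 - Tm2)) + T41 ≤ P := by
      have k1 : 9 * w ^ 4 * (26 * (w * S)) ≤ 9 * w ^ 4 * P :=
        mul_le_mul_of_nonneg_left h26w (by positivity)
      have k2 : 234 * w ^ 5 * Tm1 = 234 * w ^ 4 * P := by rw [← hTm1]; ring
      have k3 : 234 * w * P ≤ 234 * w * (w ^ 4 * Tm2) :=
        mul_le_mul_of_nonneg_left hw4 (by positivity)
      have k4 : 13 * (9 * w ^ 5 * T41) ≤ 13 * P := by linarith
      have k5 : 0 ≤ (117 * w ^ 5 - 243 * w ^ 4 + 234 * w - 13) * P :=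
        mul_nonneg (poly_cert hw127) hP0.le
      have hmul : 117 * w ^ 5 * (2 * (S + (Tm1 - Tm2)) + T41) ≤ 117 * w ^ 5 * P := by
        linarith [k1, k2, k3, k4, k5]
      exact le_of_mul_le_mul_left hmul (by positivity)
    rw [hcalc, hA]
    linarith [hAneg, hkey]
  linarith [htail, hfin]
end

section
/- Let a, b be real numbers with 3 ≤ a < b. Then for every x ∈ (1, a], φ_{a,b}(x) ≥ Σ_{k=0}^∞ (-1)^k x^k a^{-k(k-1)/2}, and the right-hand side equals g_{√a}(-√a · x), the value of the partial theta function with parameter √a at -√a · x. -/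
open scoped Classical

def myT : ℕ → ℕ
  | 0 => 0
  | n + 1 => myT n + n

def myE : ℕ → ℕ
  | 0 => 0
  | n + 1 => myE n + n / 2

lemma myT_succ (n : ℕ) : myT (n + 1) = myT n + n := rfl
lemma myE_succ (n : ℕ) : myE (n + 1) = myE n + n / 2 := rfl

lemma two_myT (k : ℕ) : 2 * myT k = k * (k - 1) := by
  induction k with
  | zero => simp [myT]
  | succ n ih =>
    rw [myT_succ]
    cases n with
    | zero => simp [myT]
    | succ m =>
      have ih' : 2 * myT (m + 1) = (m + 1) * m := by simpa using ih
      have h : (m + 1 + 1) * (m + 1 + 1 - 1) = (m + 1) * m + 2 * (m + 1) := by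
        simp only [Nat.add_sub_cancel]; ring
      omega

lemma myT_eq (k : ℕ) : myT k = k * (k - 1) / 2 := by
  have := two_myT k; omega

lemma myE_vals (m : ℕ) : myE (2 * m + 1) = m * m ∧ myE (2 * m + 2) = m * (m + 1) := by
  induction m with
  | zero => exact ⟨rfl, rfl⟩
  | succ m ih =>
    obtain ⟨h1, h2⟩ := ih
    have e3 : myE (2 * m + 3) = myE (2 * m + 2) + (2 * m + 2) / 2 := rfl
    have e4 : myE (2 * m + 4) = myE (2 * m + 3) + (2 * m + 3) / 2 := rfl
    constructor
    · have : 2 * (m + 1) + 1 = 2 * m + 3 := by ring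
      rw [this, e3, h2]; have : (m+1)*(m+1) = m*(m+1) + (m+1) := by ring
      omega
    · have : 2 * (m + 1) + 2 = 2 * m + 4 := by ring
      rw [this, e4, e3, h2]
      have hd1 : (2 * m + 2) / 2 = m + 1 := by omega
      have hd2 : (2 * m + 3) / 2 = m + 1 := by omega
      have hx : (m + 1) * (m + 1 + 1) = m * (m + 1) + 2 * (m + 1) := by ring
      omega

lemma coeff_closed (a b : ℝ) (ha : 0 < a) (hb : 0 < b) (n : ℕ) :
    coeffAB a b n = (a / b) ^ (myE n) * (a ^ myT n)⁻¹ := by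
  have ha' : a ≠ 0 := ha.ne'
  have hb' : b ≠ 0 := hb.ne'
  have key : ∀ n, coeffAB a b n = (a / b) ^ (myE n) * (a ^ myT n)⁻¹ ∧
      coeffAB a b (n + 1) = (a / b) ^ (myE (n + 1)) * (a ^ myT (n + 1))⁻¹ := by
    intro n
    induction n with
    | zero =>
      constructor
      · show (1:ℝ) = _ ; simp [myE, myT]
      · show (1:ℝ) = _ ; simp [myE, myT]
    | succ m ih =>
      obtain ⟨h0, h1⟩ := ih
      refine ⟨h1, ?_⟩
      show coeffAB a b (m + 2) = _
      rw [coeffAB, h0, h1]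
      have hT1 : myT (m + 1) = myT m + m := rfl
      have hT2 : myT (m + 2) = myT m + m + (m + 1) := by
        rw [myT_succ, myT_succ]
      have hE1 : myE (m + 1) = myE m + m / 2 := rfl
      by_cases hm : Even m
      · have hE2 : myE (m + 2) = myE m + 2 * (m / 2) := by
          rw [myE_succ, myE_succ]
          obtain ⟨j, hj⟩ := hm
          omega
        simp only [if_pos hm, hT1, hT2, hE1, hE2, pow_add]
        field_simp
        ring
      · have hE2 : myE (m + 2) = myE m + 2 * (m / 2) + 1 := by
          rw [myE_succ, myE_succ]
          have hm' : m % 2 = 1 := Nat.odd_iff.mp (Nat.not_even_iff_odd.mp hm)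
          omega
        simp only [if_neg hm, hT1, hT2, hE1, hE2, pow_add]
        field_simp
        ring
  exact (key n).1

lemma one_sub_pow_le' (r : ℝ) (h0 : 0 ≤ r) (h1 : r ≤ 1) (n : ℕ) :
    1 - r ^ n ≤ n * (1 - r) := by
  induction n with
  | zero => simp
  | succ n ih =>
    have hp : r ^ n ≤ 1 := pow_le_one₀ h0 h1
    have hs : r ^ (n + 1) = r * r ^ n := pow_succ' r n
    push_cast
    nlinarith [pow_nonneg h0 n]

lemma mul_succ_le_ninepow (m : ℕ) : ((m : ℝ)) * ((m : ℝ) + 1) ≤ 9 ^ m := by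
  induction m with
  | zero => norm_num
  | succ m ih =>
    have h1 : (1 : ℝ) ≤ 9 ^ m := one_le_pow₀ (by norm_num)
    rw [pow_succ]
    push_cast
    nlinarith


/-- For `3 ≤ a < b` and `x ∈ (1, a]`,
`φ_{a,b}(x) ≥ Σ (-1)ᵏ xᵏ a^{-k(k-1)/2}`, and the right-hand side equals
`g_{√a}(-√a·x)`. -/
theorem phiAB_ge_partialTheta (a b : ℝ) (ha : 3 ≤ a) (hab : a < b) :
    ∀ x ∈ Set.Ioc (1 : ℝ) a,
      (∑' k : ℕ, (-1 : ℝ) ^ k * x ^ k / a ^ (k * (k - 1) / 2)) ≤ phiAB a b x ∧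
      (∑' k : ℕ, (-1 : ℝ) ^ k * x ^ k / a ^ (k * (k - 1) / 2)) =
        partialThetaReal (Real.sqrt a) (-(Real.sqrt a * x)) := by
  rintro x ⟨hx1, hxa⟩
  have ha0 : (0:ℝ) < a := by linarith
  have hb0 : (0:ℝ) < b := by linarith
  have ha1 : (1:ℝ) ≤ a := by linarith
  have hx0 : (0:ℝ) < x := by linarith
  set r : ℝ := a / b with hrdef
  have hr0 : 0 < r := div_pos ha0 hb0
  have hr1 : r < 1 := (div_lt_one hb0).mpr hab
  have hu : ∀ k, coeffAB a b k = r ^ myE k * (a ^ myT k)⁻¹ :=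
    fun k => coeff_closed a b ha0 hb0 k
  have hrE1 : ∀ k, r ^ myE k ≤ 1 := fun k => pow_le_one₀ hr0.le hr1.le
  have hrE0 : ∀ k, 0 ≤ r ^ myE k := fun k => pow_nonneg hr0.le _
  have hcoeff_nonneg : ∀ k, 0 ≤ coeffAB a b k := by
    intro k; rw [hu k]; positivity
  have hcoeff_le : ∀ k, coeffAB a b k ≤ (a ^ myT k)⁻¹ := by
    intro k; rw [hu k]
    have h := inv_nonneg.mpr (pow_pos ha0 (myT k)).le
    nlinarith [hrE1 k]
  -- summability
  have hexp : ∀ k : ℕ, 2 * k ≤ myT k + 4 := by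
    intro k
    have h2 := two_myT k
    rcases Nat.lt_or_ge k 5 with hk | hk
    · interval_cases k <;> omega
    · have h3 : 4 * k ≤ (k - 1) * k := Nat.mul_le_mul_right k (by omega)
      have h4 : (k - 1) * k = k * (k - 1) := Nat.mul_comm _ _
      omega
  have hbound : ∀ k : ℕ, x ^ k * (a ^ myT k)⁻¹ ≤ a ^ 4 * (a⁻¹) ^ k := by
    intro k
    have h1 : (a:ℝ) ^ k * a ^ k ≤ a ^ 4 * a ^ myT k := by
      rw [← pow_add, ← pow_add]
      exact pow_le_pow_right₀ ha1 (by have := hexp k; omega)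
    have hx' : x ^ k ≤ a ^ k := pow_le_pow_left₀ hx0.le hxa k
    have hpk : (0:ℝ) < a ^ k := pow_pos ha0 _
    have hpT : (0:ℝ) < a ^ myT k := pow_pos ha0 _
    have h2 : a ^ k * (a ^ myT k)⁻¹ ≤ a ^ 4 * (a⁻¹) ^ k := by
      rw [inv_pow, ← div_eq_mul_inv, ← div_eq_mul_inv, div_le_div_iff₀ hpT hpk]
      linarith [h1]
    calc x ^ k * (a ^ myT k)⁻¹ ≤ a ^ k * (a ^ myT k)⁻¹ :=
          mul_le_mul_of_nonneg_right hx' (inv_nonneg.mpr hpT.le)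
      _ ≤ _ := h2
  have hgeo : Summable (fun k : ℕ => a ^ 4 * (a⁻¹) ^ k) := by
    apply Summable.mul_left
    apply summable_geometric_of_lt_one (by positivity)
    rw [inv_lt_one_iff₀]; right; linarith
  have SC : Summable (fun k : ℕ => (-1:ℝ) ^ k * x ^ k * (a ^ myT k)⁻¹) := by
    apply Summable.of_abs
    apply Summable.of_nonneg_of_le (fun k => abs_nonneg _) _ hgeo
    intro k
    rw [abs_mul, abs_mul, abs_pow, abs_pow, abs_neg, abs_one, one_pow, one_mul,
      abs_of_pos hx0, abs_inv, abs_pow, abs_of_pos ha0]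
    exact hbound k
  have SP : Summable (fun k : ℕ => (-1:ℝ) ^ k * coeffAB a b k * x ^ k) := by
    apply Summable.of_abs
    apply Summable.of_nonneg_of_le (fun k => abs_nonneg _) _ hgeo
    intro k
    rw [abs_mul, abs_mul, abs_pow, abs_pow, abs_neg, abs_one, one_pow, one_mul,
      abs_of_pos hx0, abs_of_nonneg (hcoeff_nonneg k)]
    calc coeffAB a b k * x ^ k ≤ (a ^ myT k)⁻¹ * x ^ k :=
          mul_le_mul_of_nonneg_right (hcoeff_le k) (pow_nonneg hx0.le k)
      _ = x ^ k * (a ^ myT k)⁻¹ := mul_comm _ _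
      _ ≤ _ := hbound k
  -- the difference sequence
  set D : ℕ → ℝ := fun k =>
    (-1:ℝ) ^ k * coeffAB a b k * x ^ k - (-1:ℝ) ^ k * x ^ k * (a ^ myT k)⁻¹ with hDdef
  have hDval : ∀ k, D k = (-1:ℝ) ^ (k+1) * x ^ k * ((a ^ myT k)⁻¹ * (1 - r ^ myE k)) := by
    intro k
    rw [hDdef]
    simp only
    rw [hu k, pow_succ]
    ring
  have hd_nonneg : ∀ k, 0 ≤ (a ^ myT k)⁻¹ * (1 - r ^ myE k) := by
    intro k
    have := hrE1 k
    have h2 := inv_nonneg.mpr (pow_pos ha0 (myT k)).le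
    nlinarith
  have pair : ∀ m : ℕ, 0 ≤ D (2*m+1) + D (2*m+2) := by
    intro m
    obtain ⟨hE1, hE2⟩ := myE_vals m
    have core : (a ^ (2*m))⁻¹ * (1 - r ^ (m*(m+1))) ≤ 1 - r ^ (m*m) := by
      rcases Nat.eq_zero_or_pos m with hm | hm
      · subst hm; simp
      · have h9 : ((m:ℝ)) * ((m:ℝ)+1) ≤ a ^ (2*m) := by
          calc ((m:ℝ)) * ((m:ℝ)+1) ≤ 9 ^ m := mul_succ_le_ninepow m
            _ = 3 ^ (2*m) := by rw [pow_mul]; norm_num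
            _ ≤ a ^ (2*m) := pow_le_pow_left₀ (by norm_num) ha _
        have hgl : 1 - r ^ (m*(m+1)) ≤ ((m*(m+1) : ℕ) : ℝ) * (1-r) :=
          one_sub_pow_le' r hr0.le hr1.le _
        push_cast at hgl
        have hge : r ^ (m*m) ≤ r := by
          calc r ^ (m*m) ≤ r ^ 1 :=
                pow_le_pow_of_le_one hr0.le hr1.le (by nlinarith)
            _ = r := pow_one r
        have hp : (0:ℝ) < a ^ (2*m) := pow_pos ha0 _
        rw [inv_mul_le_iff₀ hp]
        nlinarith [mul_nonneg (sub_nonneg.mpr h9) (sub_nonneg.mpr hr1.le),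
          mul_nonneg hp.le (sub_nonneg.mpr hge)]
    have hdm : D (2*m+1) + D (2*m+2) =
        x ^ (2*m+1) * ((a ^ myT (2*m+1))⁻¹ * (1 - r ^ (m*m)))
        - x ^ (2*m+2) * ((a ^ myT (2*m+2))⁻¹ * (1 - r ^ (m*(m+1)))) := by
      rw [hDval, hDval, hE1, hE2]
      have s1 : (-1:ℝ) ^ (2*m+1+1) = 1 := by
        rw [show 2*m+1+1 = 2*(m+1) from by ring, pow_mul]; norm_num
      have s2 : (-1:ℝ) ^ (2*m+2+1) = -1 := by
        rw [show 2*m+2+1 = 2*(m+1)+1 from by ring, pow_succ, pow_mul]; norm_num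
      rw [s1, s2]; ring
    rw [hdm, sub_nonneg]
    have hT2v : myT (2*m+2) = myT (2*m+1) + (2*m+1) := myT_succ _
    have hd2 : 0 ≤ (a ^ myT (2*m+2))⁻¹ * (1 - r ^ (m*(m+1))) := by
      have := hd_nonneg (2*m+2); rwa [hE2] at this
    have key2 : x * ((a ^ myT (2*m+2))⁻¹ * (1 - r ^ (m*(m+1)))) ≤
        (a ^ myT (2*m+1))⁻¹ * (1 - r ^ (m*m)) := by
      have step1 : x * ((a ^ myT (2*m+2))⁻¹ * (1 - r ^ (m*(m+1)))) ≤
          a * ((a ^ myT (2*m+2))⁻¹ * (1 - r ^ (m*(m+1)))) :=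
        mul_le_mul_of_nonneg_right hxa hd2
      refine step1.trans ?_
      have hrw : a * ((a ^ myT (2*m+2))⁻¹ * (1 - r ^ (m*(m+1)))) =
          (a ^ myT (2*m+1))⁻¹ * ((a ^ (2*m))⁻¹ * (1 - r ^ (m*(m+1)))) := by
        rw [hT2v, pow_add, show (2*m+1) = 2*m+1 from rfl, pow_succ]
        have h1 : (a:ℝ) ^ myT (2*m+1) ≠ 0 := (pow_pos ha0 _).ne'
        have h2 : (a:ℝ) ^ (2*m) ≠ 0 := (pow_pos ha0 _).ne'
        field_simp
      rw [hrw]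
      exact mul_le_mul_of_nonneg_left core (inv_nonneg.mpr (pow_pos ha0 _).le)
    calc x ^ (2*m+2) * ((a ^ myT (2*m+2))⁻¹ * (1 - r ^ (m*(m+1))))
        = x ^ (2*m+1) * (x * ((a ^ myT (2*m+2))⁻¹ * (1 - r ^ (m*(m+1))))) := by
          rw [pow_succ]; ring
      _ ≤ x ^ (2*m+1) * ((a ^ myT (2*m+1))⁻¹ * (1 - r ^ (m*m))) :=
          mul_le_mul_of_nonneg_left key2 (pow_nonneg hx0.le _)
  have SD : Summable D := SP.sub SC
  set g : ℕ → ℝ := fun n => D (n+1) with hgdef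
  have SD1 : Summable g := (summable_nat_add_iff 1).mpr SD
  have Se : Summable (fun m => g (2*m)) :=
    SD1.comp_injective (fun p q h => by omega)
  have So : Summable (fun m => g (2*m+1)) :=
    SD1.comp_injective (fun p q h => by omega)
  have hsplit : (∑' m, g (2*m)) + (∑' m, g (2*m+1)) = ∑' n, g n :=
    tsum_even_add_odd Se So
  have hD0 : D 0 = 0 := by
    rw [hDdef]; simp [coeffAB, myT]
  have pair' : ∀ m : ℕ, 0 ≤ g (2*m) + g (2*m+1) := by
    intro m
    have e1 : 2*m+1 = (2*m)+1 := rfl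
    have e2 : (2*m+1)+1 = 2*m+2 := by omega
    have hg1 : g (2*m) = D (2*m+1) := rfl
    have hg2 : g (2*m+1) = D (2*m+2) := rfl
    rw [hg1, hg2]
    exact pair m
  have hDnn : 0 ≤ ∑' k, D k := by
    rw [tsum_eq_zero_add' SD1, hD0, zero_add, ← hsplit, ← Se.tsum_add So]
    exact tsum_nonneg pair'
  have hLHS : (∑' k : ℕ, (-1:ℝ) ^ k * x ^ k / a ^ (k * (k-1) / 2)) =
      ∑' k : ℕ, (-1:ℝ) ^ k * x ^ k * (a ^ myT k)⁻¹ :=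
    tsum_congr fun k => by rw [← myT_eq, div_eq_mul_inv]
  constructor
  · rw [hLHS]
    have hsub := SP.tsum_sub SC
    have hphi : phiAB a b x = ∑' k : ℕ, (-1:ℝ) ^ k * coeffAB a b k * x ^ k := rfl
    rw [hphi]
    have : ∑' k, D k = (∑' k : ℕ, (-1:ℝ) ^ k * coeffAB a b k * x ^ k)
        - ∑' k : ℕ, (-1:ℝ) ^ k * x ^ k * (a ^ myT k)⁻¹ := by
      rw [← hsub]
    linarith [hDnn, this.symm.le]
  · have hs0 : (0:ℝ) < Real.sqrt a := Real.sqrt_pos.mpr ha0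
    have hsq : Real.sqrt a ^ 2 = a := Real.sq_sqrt ha0.le
    rw [partialThetaReal]
    refine tsum_congr fun k => ?_
    have hk2 : k ^ 2 = 2 * myT k + k := by
      have h2 := two_myT k
      cases k with
      | zero => simp [myT]
      | succ n =>
        have h3 : (n+1) ^ 2 = (n+1) * n + (n+1) := by ring
        have h4 : (n+1) * (n+1-1) = (n+1) * n := by simp
        omega
    have hneg : (-(Real.sqrt a * x)) ^ k = (-1:ℝ) ^ k * (Real.sqrt a ^ k * x ^ k) := by
      rw [show -(Real.sqrt a * x) = (-1) * (Real.sqrt a * x) by ring, mul_pow, mul_pow]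
    rw [← myT_eq, hk2, pow_add, pow_mul, hsq, hneg]
    have h1 : (a:ℝ) ^ myT k ≠ 0 := (pow_pos ha0 _).ne'
    have h2 : Real.sqrt a ^ k ≠ 0 := (pow_pos hs0 _).ne'
    field_simp
end

section
/- Let a, b, c be real numbers with 3 ≤ a < c < b. Then for every x ∈ (1, a], φ_{a,c}(x) ≤ φ_{a,b}(x); that is, for fixed a and fixed x ∈ (1, a], the value φ_{a,b}(x) is non-decreasing as a function of the second parameter b on (a, ∞). -/
open scoped Classical

private def Efn : ℕ → ℕ
  | 0 => 0
  | 1 => 0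
  | n + 2 => Efn n + (n + 1)

private def Ofn : ℕ → ℕ
  | 0 => 0
  | 1 => 0
  | n + 2 => Ofn n + n

private lemma Efn_succ : ∀ n, Efn (n + 1) = Efn n + (n + 1) / 2
  | 0 => rfl
  | 1 => rfl
  | n + 2 => by
      show Efn (n + 1) + (n + 2) = (Efn n + (n + 1)) + (n + 3) / 2
      rw [Efn_succ n]; omega

private lemma Ofn_succ : ∀ n, Ofn (n + 1) = Ofn n + n / 2
  | 0 => rfl
  | 1 => rfl
  | n + 2 => by
      show Ofn (n + 1) + (n + 1) = (Ofn n + n) + (n + 2) / 2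
      rw [Ofn_succ n]; omega

private lemma coeffAB_closed (a b : ℝ) (ha : 0 < a) (hb : 0 < b) :
    ∀ n, coeffAB a b n = (a ^ Efn n)⁻¹ * (b ^ Ofn n)⁻¹
  | 0 => by simp [coeffAB, Efn, Ofn]
  | 1 => by simp [coeffAB, Efn, Ofn]
  | n + 2 => by
      have ha' : a ≠ 0 := ne_of_gt ha
      have hb' : b ≠ 0 := ne_of_gt hb
      have h1 := coeffAB_closed a b ha hb (n + 1)
      have h0 := coeffAB_closed a b ha hb n
      have e2 : Efn (n + 2) = Efn n + (n + 1) := rfl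
      have o2 : Ofn (n + 2) = Ofn n + n := rfl
      rw [coeffAB, h1, h0]
      have hs := Efn_succ n
      have os := Ofn_succ n
      rcases Nat.even_or_odd n with he | ho
      · rw [if_pos he]
        obtain ⟨m, hm⟩ := he
        have hE : Efn (n + 2) + Efn n = Efn (n + 1) * 2 + 1 := by rw [e2]; omega
        have hO : Ofn (n + 2) + Ofn n = Ofn (n + 1) * 2 := by rw [o2]; omega
        have key : a ^ (Efn (n + 2) + Efn n) * b ^ (Ofn (n + 2) + Ofn n)
            = a ^ (Efn (n + 1) * 2 + 1) * b ^ (Ofn (n + 1) * 2) := by rw [hE, hO]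
        rw [pow_add, pow_add, pow_succ, pow_mul, pow_mul] at key
        field_simp
        linear_combination key
      · rw [if_neg (Nat.not_even_iff_odd.mpr ho)]
        obtain ⟨m, hm⟩ := ho
        have hE : Efn (n + 2) + Efn n = Efn (n + 1) * 2 := by rw [e2]; omega
        have hO : Ofn (n + 2) + Ofn n = Ofn (n + 1) * 2 + 1 := by rw [o2]; omega
        have key : a ^ (Efn (n + 2) + Efn n) * b ^ (Ofn (n + 2) + Ofn n)
            = a ^ (Efn (n + 1) * 2) * b ^ (Ofn (n + 1) * 2 + 1) := by rw [hE, hO]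
        rw [pow_add, pow_add, pow_succ, pow_mul, pow_mul] at key
        field_simp
        linear_combination key

private lemma Efn_lb : ∀ k, 2 * k ≤ Efn k + 6 ∧ k ≤ Efn k + 3
  | 0 => by simp [Efn]
  | 1 => by simp [Efn]
  | k + 2 => by
      obtain ⟨h1, h2⟩ := Efn_lb k
      have e2 : Efn (k + 2) = Efn k + (k + 1) := rfl
      omega

private lemma one_le_Ofn : ∀ m, 1 ≤ Ofn (m + 3)
  | 0 => by simp [Ofn]
  | 1 => by simp [Ofn]
  | m + 2 => by
      have := one_le_Ofn m
      have : Ofn (m + 2 + 3) = Ofn (m + 3) + (m + 3) := rfl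
      omega

private lemma coeff_nonneg (a b : ℝ) (ha : 0 < a) (hb : 0 < b) (n : ℕ) :
    0 ≤ coeffAB a b n := by
  rw [coeffAB_closed a b ha hb]
  positivity

/-- For `0 < q ≤ p ≤ 1/3`, the difference `p^n - q^n` is antitone in `n ≥ 1`. -/
private lemma diff_pow_anti {p q : ℝ} (hq : 0 < q) (hqp : q ≤ p) (hp : p ≤ 1 / 3)
    {m n : ℕ} (hm : 1 ≤ m) (hmn : m ≤ n) : p ^ n - q ^ n ≤ p ^ m - q ^ m := by
  induction n, hmn using Nat.le_induction with
  | base => exact le_refl _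
  | succ n hn ih =>
      have hn1 : 1 ≤ n := le_trans hm hn
      obtain ⟨l, rfl⟩ := Nat.exists_eq_add_of_le hn1
      have hqm : q ^ l ≤ p ^ l := pow_le_pow_left₀ hq.le hqp l
      have hql : (0:ℝ) ≤ q ^ l := by positivity
      have h2 : q * (1 - q) ≤ p * (1 - p) := by nlinarith
      have h3 : q * (1 - q) * q ^ l ≤ p * (1 - p) * p ^ l :=
        mul_le_mul h2 hqm hql (by nlinarith)
      refine le_trans ?_ ih
      have e1 : p ^ (1 + l + 1) = p * p * p ^ l := by ring
      have e2 : q ^ (1 + l + 1) = q * q * q ^ l := by ring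
      have e3 : p ^ (1 + l) = p * p ^ l := by ring
      have e4 : q ^ (1 + l) = q * q ^ l := by ring
      rw [e1, e2, e3, e4]
      nlinarith [h3]

private lemma summable_coeff (a b x : ℝ) (ha : 3 ≤ a) (hb : 1 ≤ b) (hx0 : 0 < x)
    (hxa : x ≤ a) : Summable (fun k => coeffAB a b k * x ^ k) := by
  have ha0 : (0:ℝ) < a := by linarith
  have hb0 : (0:ℝ) < b := by linarith
  have ha1 : (1:ℝ) ≤ a := by linarith
  refine Summable.of_nonneg_of_le ?_ ?_
    (((summable_geometric_of_lt_one (by positivity)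
      (inv_lt_one_of_one_lt₀ (show (1:ℝ) < a by linarith))).mul_left (a ^ 6)))
  · intro k
    have := coeff_nonneg a b ha0 hb0 k
    positivity
  · intro k
    rw [coeffAB_closed a b ha0 hb0 k]
    have hlb := Efn_lb k
    have h1 : (b ^ Ofn k)⁻¹ ≤ 1 := inv_le_one_of_one_le₀ (one_le_pow₀ hb)
    have h2 : x ^ k ≤ a ^ k := pow_le_pow_left₀ hx0.le hxa k
    have h3 : (a ^ Efn k)⁻¹ * (b ^ Ofn k)⁻¹ * x ^ k ≤ (a ^ Efn k)⁻¹ * 1 * a ^ k :=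
      mul_le_mul (mul_le_mul_of_nonneg_left h1 (by positivity)) h2 (by positivity)
        (by positivity)
    calc (a ^ Efn k)⁻¹ * (b ^ Ofn k)⁻¹ * x ^ k ≤ (a ^ Efn k)⁻¹ * 1 * a ^ k := h3
      _ = a ^ k / a ^ Efn k := by rw [mul_one, mul_comm, ← div_eq_mul_inv]
      _ ≤ a ^ 6 / a ^ k := by
          rw [div_le_div_iff₀ (by positivity) (by positivity), ← pow_add, ← pow_add]
          exact pow_le_pow_right₀ ha1 (by omega)
      _ = a ^ 6 * a⁻¹ ^ k := by rw [inv_pow, div_eq_mul_inv]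

private lemma Ofn_pos {k : ℕ} (hk : 3 ≤ k) : 1 ≤ Ofn k := by
  obtain ⟨m, rfl⟩ := Nat.exists_eq_add_of_le hk
  rw [Nat.add_comm]
  exact one_le_Ofn m

private lemma key_step (a b c x : ℝ) (ha : 3 ≤ a) (hac : a < c) (hcb : c < b)
    (hx1 : 1 < x) (hxa : x ≤ a) {k : ℕ} (hk : 3 ≤ k) :
    (coeffAB a c (k + 1) - coeffAB a b (k + 1)) * x ^ (k + 1)
      ≤ (coeffAB a c k - coeffAB a b k) * x ^ k := by
  have ha0 : (0:ℝ) < a := by linarith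
  have hc0 : (0:ℝ) < c := by linarith
  have hb0 : (0:ℝ) < b := by linarith
  have hx0 : (0:ℝ) < x := by linarith
  set p := c⁻¹ with hp_def
  set q := b⁻¹ with hq_def
  have hq0 : 0 < q := by positivity
  have hqp : q ≤ p := by
    apply inv_anti₀ hc0 hcb.le
  have hp3 : p ≤ 1 / 3 := by
    rw [hp_def]
    rw [inv_le_comm₀ hc0 (by norm_num)]
    norm_num; linarith
  -- closed forms
  have cf : ∀ j, coeffAB a c j - coeffAB a b j
      = (a ^ Efn j)⁻¹ * (p ^ Ofn j - q ^ Ofn j) := by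
    intro j
    rw [coeffAB_closed a c ha0 hc0 j, coeffAB_closed a b ha0 hb0 j,
      hp_def, hq_def, inv_pow, inv_pow]
    ring
  rw [cf, cf]
  -- exponent facts
  have hO1 : 1 ≤ Ofn k := Ofn_pos hk
  have hOm : Ofn k ≤ Ofn (k + 1) := by rw [Ofn_succ]; omega
  have hEg : Efn k + 2 ≤ Efn (k + 1) := by rw [Efn_succ]; omega
  have hdiff : p ^ Ofn (k + 1) - q ^ Ofn (k + 1) ≤ p ^ Ofn k - q ^ Ofn k :=
    diff_pow_anti hq0 hqp hp3 hO1 hOm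
  have hdpos : (0:ℝ) ≤ p ^ Ofn k - q ^ Ofn k :=
    sub_nonneg.mpr (pow_le_pow_left₀ hq0.le hqp _)
  have hdpos' : (0:ℝ) ≤ p ^ Ofn (k + 1) - q ^ Ofn (k + 1) :=
    sub_nonneg.mpr (pow_le_pow_left₀ hq0.le hqp _)
  have h1 : (a ^ Efn (k + 1))⁻¹ ≤ (a ^ Efn k)⁻¹ * (a ^ 2)⁻¹ := by
    rw [← mul_inv, ← pow_add]
    exact inv_anti₀ (by positivity) (pow_le_pow_right₀ (by linarith) hEg)
  have h2 : x ^ (k + 1) ≤ x ^ k * a := by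
    rw [pow_succ]
    exact mul_le_mul_of_nonneg_left hxa (by positivity)
  have hinner : (a ^ Efn (k + 1))⁻¹ * (p ^ Ofn (k + 1) - q ^ Ofn (k + 1))
      ≤ ((a ^ Efn k)⁻¹ * (a ^ 2)⁻¹) * (p ^ Ofn k - q ^ Ofn k) :=
    mul_le_mul h1 hdiff hdpos' (by positivity)
  calc (a ^ Efn (k + 1))⁻¹ * (p ^ Ofn (k + 1) - q ^ Ofn (k + 1)) * x ^ (k + 1)
      ≤ ((a ^ Efn k)⁻¹ * (a ^ 2)⁻¹) * (p ^ Ofn k - q ^ Ofn k) * (x ^ k * a) :=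
        mul_le_mul hinner h2 (by positivity) (by positivity)
    _ = ((a ^ Efn k)⁻¹ * (p ^ Ofn k - q ^ Ofn k) * x ^ k) * (a * (a ^ 2)⁻¹) := by ring
    _ ≤ ((a ^ Efn k)⁻¹ * (p ^ Ofn k - q ^ Ofn k) * x ^ k) * 1 := by
        apply mul_le_mul_of_nonneg_left _ (by positivity)
        have : a * (a ^ 2)⁻¹ = a⁻¹ := by
          field_simp
        rw [this]
        exact inv_le_one_of_one_le₀ (by linarith)
    _ = (a ^ Efn k)⁻¹ * (p ^ Ofn k - q ^ Ofn k) * x ^ k := mul_one _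

private lemma coeff_mono (a b c : ℝ) (ha : 0 < a) (hc : 0 < c) (hcb : c ≤ b) (k : ℕ) :
    coeffAB a b k ≤ coeffAB a c k := by
  have hb : 0 < b := lt_of_lt_of_le hc hcb
  rw [coeffAB_closed a b ha hb, coeffAB_closed a c ha hc]
  exact mul_le_mul_of_nonneg_left
    (inv_anti₀ (by positivity) (pow_le_pow_left₀ hc.le hcb _)) (by positivity)

private lemma summable_signed (a b x : ℝ) (ha : 3 ≤ a) (hb : 1 ≤ b) (hx0 : 0 < x)
    (hxa : x ≤ a) : Summable (fun k => (-1:ℝ) ^ k * coeffAB a b k * x ^ k) := by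
  rw [← summable_abs_iff]
  have : (fun k => |(-1:ℝ) ^ k * coeffAB a b k * x ^ k|)
      = fun k => coeffAB a b k * x ^ k := by
    funext k
    rw [abs_mul, abs_mul, abs_pow, abs_neg, abs_one, one_pow, one_mul,
      abs_of_nonneg (coeff_nonneg a b (by linarith) (by linarith) k), abs_pow,
      abs_of_nonneg hx0.le]
  rw [this]
  exact summable_coeff a b x ha hb hx0 hxa


/-- For `3 ≤ a < c < b` and `x ∈ (1, a]`, one has
`φ_{a,c}(x) ≤ φ_{a,b}(x)`: for fixed `a` and `x ∈ (1, a]`, `φ_{a,b}(x)` is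
non-decreasing in the second parameter. -/
theorem phiAB_mono_snd (a b c : ℝ) (ha : 3 ≤ a) (hac : a < c) (hcb : c < b) :
    ∀ x ∈ Set.Ioc (1 : ℝ) a, phiAB a c x ≤ phiAB a b x := by
  rintro x ⟨hx1, hxa⟩
  have ha0 : (0:ℝ) < a := by linarith
  have hc0 : (0:ℝ) < c := by linarith
  have hb0 : (0:ℝ) < b := by linarith
  have hx0 : (0:ℝ) < x := by linarith
  have hSb := summable_signed a b x ha (by linarith) hx0 hxa
  have hSc := summable_signed a c x ha (by linarith) hx0 hxa
  have Sb' := summable_coeff a b x ha (by linarith) hx0 hxa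
  have Sc' := summable_coeff a c x ha (by linarith) hx0 hxa
  set d : ℕ → ℝ := fun k => coeffAB a c k - coeffAB a b k with hd
  set f : ℕ → ℝ := fun k => d k * x ^ k with hf
  have hfsum : Summable f := by
    have : f = fun k => coeffAB a c k * x ^ k - coeffAB a b k * x ^ k := by
      funext k; simp only [hf, hd]; ring
    rw [this]; exact Sc'.sub Sb'
  have hfnonneg : ∀ k, 0 ≤ f k := by
    intro k
    have := coeff_mono a b c ha0 hc0 hcb.le k
    have : 0 ≤ d k := by simp only [hd]; linarith
    positivity
  set g : ℕ → ℝ := fun k => (-1:ℝ) ^ (k + 1) * f k with hg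
  have hgsum : Summable g := by
    rw [← summable_abs_iff]
    have : (fun k => |g k|) = f := by
      funext k
      simp only [hg]
      rw [abs_mul, abs_pow, abs_neg, abs_one, one_pow, one_mul,
        abs_of_nonneg (hfnonneg k)]
    rw [this]; exact hfsum
  have keyeq : phiAB a b x - phiAB a c x = ∑' k, g k := by
    rw [phiAB, phiAB, ← Summable.tsum_sub hSb hSc]
    apply tsum_congr
    intro k
    simp only [hg, hf, hd]
    ring
  suffices h : 0 ≤ phiAB a b x - phiAB a c x by linarith
  rw [keyeq]
  have inj2 : Function.Injective (fun j : ℕ => 2 * j) := fun i j h => by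
    simp only at h; omega
  have inj2' : Function.Injective (fun j : ℕ => 2 * j + 1) := fun i j h => by
    simp only at h; omega
  have inj2'' : Function.Injective (fun j : ℕ => 2 * (j + 1)) := fun i j h => by
    simp only at h; omega
  have hge : Summable (fun j => g (2 * j)) := hgsum.comp_injective inj2
  have hgo : Summable (fun j => g (2 * j + 1)) := hgsum.comp_injective inj2'
  have hfe : Summable (fun j => f (2 * j)) := hfsum.comp_injective inj2
  have hfo : Summable (fun j => f (2 * j + 1)) := hfsum.comp_injective inj2'
  have hfe' : Summable (fun j => f (2 * (j + 1))) := hfsum.comp_injective inj2''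
  rw [← tsum_even_add_odd hge hgo]
  have he : ∀ j, g (2 * j) = -(f (2 * j)) := by
    intro j
    simp only [hg]
    have : Odd (2 * j + 1) := ⟨j, by ring⟩
    rw [this.neg_one_pow]
    ring
  have ho : ∀ j, g (2 * j + 1) = f (2 * j + 1) := by
    intro j
    simp only [hg]
    have : Even (2 * j + 1 + 1) := ⟨j + 1, by ring⟩
    rw [this.neg_one_pow]
    ring
  rw [tsum_congr he, tsum_congr ho, tsum_neg]
  have main : ∑' j, f (2 * j) ≤ ∑' j, f (2 * j + 1) := by
    have hf0 : f 0 = 0 := by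
      simp only [hf, hd]
      norm_num [coeffAB]
    have step : ∀ j, f (2 * (j + 1)) ≤ f (2 * j + 1) := by
      intro j
      cases j with
      | zero =>
          have h2 : coeffAB a c 2 = coeffAB a b 2 := by
            simp [coeffAB]
          have : f 2 = 0 := by
            simp only [hf, hd, h2]
            ring
          rw [show 2 * (0 + 1) = 2 from rfl, this, show 2 * 0 + 1 = 1 from rfl]
          exact hfnonneg 1
      | succ i =>
          have hkey := key_step a b c x ha hac hcb hx1 hxa (k := 2 * i + 3) (by omega)
          have e1 : 2 * (i + 1 + 1) = 2 * i + 3 + 1 := by ring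
          have e2 : 2 * (i + 1) + 1 = 2 * i + 3 := by ring
          rw [e1, e2]
          simp only [hf, hd]
          exact hkey
    calc ∑' j, f (2 * j) = f (2 * 0) + ∑' j, f (2 * (j + 1)) := Summable.tsum_eq_zero_add hfe
      _ = ∑' j, f (2 * (j + 1)) := by rw [show 2 * 0 = 0 from rfl, hf0, zero_add]
      _ ≤ ∑' j, f (2 * j + 1) := Summable.tsum_le_tsum step hfe' hfo
  linarith
end

section
/- Let a, b be real numbers with a ≥ 3 and b > a. Then the self-reciprocal quartic polynomial P(w) = w⁴ − a√b·w³ + ab·w² − a√b·w + 1 has no zeros on the unit circle {w ∈ ℂ : |w| = 1}, and it has exactly two zeros, counted with multiplicity, in the open unit disk {w ∈ ℂ : |w| < 1}. -/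
open scoped Classical

open Polynomial in
private lemma quartic_key_ineq (a t x : ℝ) (ha : 3 ≤ a) (ht : 0 ≤ t) (hb : a < t^2)
    (hx : x^2 ≤ 1) : 0 < 4*x^2 - 2*a*t*x + a*t^2 - 2 := by
  have ht3 : 3 < t^2 := lt_of_le_of_lt ha hb
  have ht1 : 1 < t := by nlinarith
  have hat : 4 < a*t := by nlinarith
  have hx1 : x ≤ 1 := by nlinarith
  have hx2 : -1 ≤ x := by nlinarith
  have h1 : 4 - 2*(a*t) ≤ 4*x^2 - 2*a*t*x := by
    nlinarith [mul_nonneg (by linarith : (0:ℝ) ≤ 2 - 2*x) (by linarith : (0:ℝ) ≤ a*t - 2 - 2*x)]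
  have h2 : 0 < a*t^2 - 2*(a*t) + 2 := by
    rcases le_or_gt 2 t with h | h
    · nlinarith
    · nlinarith [mul_pos (sub_pos.2 hb) (mul_pos (lt_trans one_pos ht1) (sub_pos.2 h))]
  linarith

private lemma quartic_pair_count (v w : ℂ) (hvw : v * w = 1) (hv : ‖v‖ ≠ 1) (hw : ‖w‖ ≠ 1) :
    (if ‖v‖ < 1 then 1 else 0) + (if ‖w‖ < 1 then 1 else 0) = 1 := by
  have hnorm : ‖v‖ * ‖w‖ = 1 := by rw [← norm_mul, hvw, norm_one]
  rcases lt_or_gt_of_ne hv with h | h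
  · have hv0 : 0 < ‖v‖ := by
      rcases eq_or_lt_of_le (norm_nonneg v) with h0 | h0
      · exfalso; rw [← h0] at hnorm; simp at hnorm
      · exact h0
    have : 1 < ‖w‖ := by
      by_contra hc
      push_neg at hc
      nlinarith
    rw [if_pos h, if_neg (by linarith)]
  · have : ‖w‖ < 1 := by
      by_contra hc
      push_neg at hc
      nlinarith [norm_nonneg w]
    rw [if_neg (by linarith), if_pos this]

/-- For `a ≥ 3` and `b > a`, the self-reciprocal quartic
`P(w) = w⁴ − a√b·w³ + ab·w² − a√b·w + 1` has no zeros on the unit circle and has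
exactly two zeros (with multiplicity) in the open unit disk. -/
theorem quartic_two_zeros_in_disk (a b : ℝ) (ha : 3 ≤ a) (hab : a < b) :
    (∀ z : ℂ, ‖z‖ = 1 →
        Polynomial.eval z
          (Polynomial.X ^ 4 - Polynomial.C ((a * Real.sqrt b : ℝ) : ℂ) * Polynomial.X ^ 3 +
            Polynomial.C ((a * b : ℝ) : ℂ) * Polynomial.X ^ 2 -
            Polynomial.C ((a * Real.sqrt b : ℝ) : ℂ) * Polynomial.X + 1) ≠ 0) ∧
      Multiset.card
        ((Polynomial.X ^ 4 - Polynomial.C ((a * Real.sqrt b : ℝ) : ℂ) * Polynomial.X ^ 3 +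
            Polynomial.C ((a * b : ℝ) : ℂ) * Polynomial.X ^ 2 -
            Polynomial.C ((a * Real.sqrt b : ℝ) : ℂ) * Polynomial.X + 1).roots.filter
          fun z => ‖z‖ < 1) = 2 := by
  open Polynomial in
  set s : ℂ := ((a * Real.sqrt b : ℝ) : ℂ) with hs_def
  set c : ℂ := ((a * b : ℝ) : ℂ) with hc_def
  set P : ℂ[X] := X ^ 4 - C s * X ^ 3 + C c * X ^ 2 - C s * X + 1 with hP
  have hb0 : (0:ℝ) ≤ b := by linarith
  have ht : Real.sqrt b ^ 2 = b := Real.sq_sqrt hb0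
  -- Part 1 : no zeros on the unit circle
  have hcirc : ∀ z : ℂ, ‖z‖ = 1 → P.eval z ≠ 0 := by
    intro z hz
    have hn : Complex.normSq z = 1 := by
      rw [Complex.normSq_eq_norm_sq, hz]; norm_num
    have hzc : z * (starRingEnd ℂ) z = 1 := by
      rw [Complex.mul_conj, hn, Complex.ofReal_one]
    have hre : ((2*z.re:ℝ):ℂ) = z + (starRingEnd ℂ) z := by
      rw [Complex.add_conj]
    have hPz : P.eval z
        = z^2 * (((2*z.re:ℝ):ℂ)^2 - s*((2*z.re:ℝ):ℂ) + (c - 2)) := by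
      rw [hP]
      simp only [eval_add, eval_sub, eval_mul, eval_pow, eval_X, eval_C, eval_one]
      rw [hre]
      set w := (starRingEnd ℂ) z
      linear_combination (s*z - 2*z^2 - 1 - z*w) * hzc
    have hQ : ((2*z.re:ℝ):ℂ)^2 - s*((2*z.re:ℝ):ℂ) + (c - 2)
        = (((4*z.re^2 - 2*a*(Real.sqrt b)*z.re + a*b - 2 : ℝ)):ℂ) := by
      rw [hs_def, hc_def]; push_cast; ring
    have hx : z.re^2 ≤ 1 := by
      have := Complex.normSq_apply z
      nlinarith [sq_nonneg z.im, hn, Complex.normSq_apply z]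
    have hpos : (0:ℝ) < 4*z.re^2 - 2*a*(Real.sqrt b)*z.re + a*b - 2 := by
      have := quartic_key_ineq a (Real.sqrt b) z.re ha (Real.sqrt_nonneg b) (by rw [ht]; exact hab) hx
      nlinarith [ht]
    have hz0 : z ≠ 0 := by
      intro h; rw [h] at hz; simp at hz
    rw [hPz, hQ]
    apply mul_ne_zero (pow_ne_zero _ hz0)
    exact_mod_cast ne_of_gt hpos
  refine ⟨hcirc, ?_⟩
  -- Part 2 : factor P into linear factors
  obtain ⟨d, hd⟩ := IsAlgClosed.exists_pow_nat_eq (k := ℂ) (s^2 - 4*(c-2)) (n := 2) (by norm_num)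
  set u₁ := (s + d)/2 with hu1
  set u₂ := (s - d)/2 with hu2
  have hsum : u₁ + u₂ = s := by rw [hu1, hu2]; ring
  have hmul : u₁ * u₂ = c - 2 := by rw [hu1, hu2]; linear_combination (-1/4 : ℂ) * hd
  obtain ⟨e₁, he₁⟩ := IsAlgClosed.exists_pow_nat_eq (k := ℂ) (u₁^2 - 4) (n := 2) (by norm_num)
  obtain ⟨e₂, he₂⟩ := IsAlgClosed.exists_pow_nat_eq (k := ℂ) (u₂^2 - 4) (n := 2) (by norm_num)
  set v₁ := (u₁ + e₁)/2 with hv1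
  set w₁ := (u₁ - e₁)/2 with hw1
  set v₂ := (u₂ + e₂)/2 with hv2
  set w₂ := (u₂ - e₂)/2 with hw2
  have h1s : v₁ + w₁ = u₁ := by rw [hv1, hw1]; ring
  have h1m : v₁ * w₁ = 1 := by rw [hv1, hw1]; linear_combination (-1/4 : ℂ) * he₁
  have h2s : v₂ + w₂ = u₂ := by rw [hv2, hw2]; ring
  have h2m : v₂ * w₂ = 1 := by rw [hv2, hw2]; linear_combination (-1/4 : ℂ) * he₂
  have hC1s : (C v₁) + (C w₁) = C u₁ := by rw [← C_add, h1s]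
  have hC1m : (C v₁) * (C w₁) = 1 := by rw [← C_mul, h1m, C_1]
  have hC2s : (C v₂) + (C w₂) = C u₂ := by rw [← C_add, h2s]
  have hC2m : (C v₂) * (C w₂) = 1 := by rw [← C_mul, h2m, C_1]
  have hCsum : (C u₁) + (C u₂) = C s := by rw [← C_add, hsum]
  have hCmul : (C u₁) * (C u₂) = C c - 2 := by
    rw [← C_mul, hmul, C_sub, map_ofNat]
  have q1 : (X - C v₁) * (X - C w₁) = X^2 - C u₁ * X + 1 := by
    linear_combination (-(X:ℂ[X])) * hC1s + hC1m
  have q2 : (X - C v₂) * (X - C w₂) = X^2 - C u₂ * X + 1 := by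
    linear_combination (-(X:ℂ[X])) * hC2s + hC2m
  have hfac : P = (X - C v₁) * (X - C w₁) * ((X - C v₂) * (X - C w₂)) := by
    rw [q1, q2, hP]
    linear_combination ((X:ℂ[X])^3 + X) * hCsum - (X:ℂ[X])^2 * hCmul
  have hroots : P.roots = {v₁, w₁, v₂, w₂} := by
    rw [hfac, roots_mul (mul_ne_zero (mul_ne_zero (X_sub_C_ne_zero v₁) (X_sub_C_ne_zero w₁))
        (mul_ne_zero (X_sub_C_ne_zero v₂) (X_sub_C_ne_zero w₂))),
      roots_mul (mul_ne_zero (X_sub_C_ne_zero v₁) (X_sub_C_ne_zero w₁)),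
      roots_mul (mul_ne_zero (X_sub_C_ne_zero v₂) (X_sub_C_ne_zero w₂)),
      roots_X_sub_C, roots_X_sub_C, roots_X_sub_C, roots_X_sub_C]
    rfl
  -- norms of roots are ≠ 1
  have hP0 : P ≠ 0 := by
    rw [hfac]
    exact mul_ne_zero (mul_ne_zero (X_sub_C_ne_zero v₁) (X_sub_C_ne_zero w₁))
      (mul_ne_zero (X_sub_C_ne_zero v₂) (X_sub_C_ne_zero w₂))
  have hroot_ne : ∀ v : ℂ, v ∈ P.roots → ‖v‖ ≠ 1 := by
    intro v hv h1
    exact hcirc v h1 ((mem_roots hP0).1 hv)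
  have hv₁ : ‖v₁‖ ≠ 1 := hroot_ne v₁ (by rw [hroots]; simp)
  have hw₁ : ‖w₁‖ ≠ 1 := hroot_ne w₁ (by rw [hroots]; simp)
  have hv₂ : ‖v₂‖ ≠ 1 := hroot_ne v₂ (by rw [hroots]; simp)
  have hw₂ : ‖w₂‖ ≠ 1 := hroot_ne w₂ (by rw [hroots]; simp)
  rw [hroots]
  show Multiset.card (Multiset.filter (fun z => ‖z‖ < 1) {v₁, w₁, v₂, w₂}) = 2
  have e1 := quartic_pair_count v₁ w₁ h1m hv₁ hw₁
  have e2 := quartic_pair_count v₂ w₂ h2m hv₂ hw₂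
  simp only [Multiset.insert_eq_cons, Multiset.filter_cons, Multiset.filter_singleton,
    Multiset.card_add, apply_ite Multiset.card, Multiset.card_singleton, Multiset.card_zero,
    Multiset.empty_eq_zero]
  omega
end
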